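/- Let C, D be nonempty closed subsets of a complete partial b-metric space (O, δ, s) with C ∩ D ≠ ∅, and let h, η be self-maps on C ∪ D with h(C) ⊆ D and η(D) ⊆ C. Suppose there exist ξ continuous nondecreasing with ξ⁻¹(0)={0}, ω continuous with ω(s_n)→0 implying s_n→0, and a C-class function H such that for all w ∈ C and v ∈ D: ξ(s³ δ(hw, ηv)) ≤ H(ξ(N(w,v)), ω(N(w,v))), where N(w,v) = max{δ(w,v), δ(hw,w), δ(v,ηv), (δ(w,ηv)+δ(hw,v))/(2s)}. Then h and η have a unique common fixed point, which lies in C ∩ D. -/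

import Mathlib

open Filter Topology Set NNReal

/-- A partial b-metric on `O` with coefficient `s`. -/
structure IsPartialBMetric {O : Type*} (d : O → O → ℝ) (s : ℝ) : Prop where
  one_le : 1 ≤ s
  nonneg : ∀ w z, 0 ≤ d w z
  eq_iff : ∀ w z, w = z ↔ d w w = d w z ∧ d w z = d z z
  self_le : ∀ w z, d w w ≤ d w z
  symm : ∀ w z, d w z = d z w
  triangle : ∀ w z t, d w z ≤ s * (d w t + d t z) - d t t

/-- Convergence of a sequence in a partial b-metric space. -/
def PBConv {O : Type*} (d : O → O → ℝ) (v : ℕ → O) (x : O) : Prop :=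
  Tendsto (fun m => d (v m) x) atTop (𝓝 (d x x))

/-- Cauchy sequence in a partial b-metric space. -/
def PBCauchy {O : Type*} (d : O → O → ℝ) (v : ℕ → O) : Prop :=
  ∃ L : ℝ, Tendsto (fun p : ℕ × ℕ => d (v p.1) (v p.2)) atTop (𝓝 L)

/-- Completeness of a partial b-metric space. -/
def PBComplete {O : Type*} (d : O → O → ℝ) : Prop :=
  ∀ v : ℕ → O, PBCauchy d v → ∃ x : O,
    Tendsto (fun p : ℕ × ℕ => d (v p.1) (v p.2)) atTop (𝓝 (d x x)) ∧ PBConv d v x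

/-- A partially b-closed subset (sequentially closed). -/
def PBClosed {O : Type*} (d : O → O → ℝ) (A : Set O) : Prop :=
  ∀ x : O, (∃ v : ℕ → O, (∀ n, v n ∈ A) ∧ PBConv d v x) → x ∈ A

/-- C-class function (on the nonnegative quadrant). -/
def CClassFun (H : ℝ → ℝ → ℝ) : Prop :=
  ContinuousOn (fun p : ℝ × ℝ => H p.1 p.2) {p : ℝ × ℝ | 0 ≤ p.1 ∧ 0 ≤ p.2} ∧
  (∀ t z, 0 ≤ t → 0 ≤ z → 0 ≤ H t z ∧ H t z ≤ t) ∧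
  (∀ t z, 0 ≤ t → 0 ≤ z → H t z = t → t = 0 ∨ z = 0)

/-- The quantity N(w,z) used in generalized TAC contractions. -/
noncomputable def PBN {O : Type*} (d : O → O → ℝ) (s : ℝ) (h η Q Z : O → O)
    (w z : O) : ℝ :=
  max (max (d (Q w) (Z z)) (d (h w) (Q w)))
      (max (d (Z z) (η z)) ((d (Q w) (η z) + d (h w) (Z z)) / (2 * s)))


noncomputable def iterSeq {O : Type*} (h η : O → O) (p0 : O) : ℕ → O
  | 0 => p0
  | n+1 => if Even n then h (iterSeq h η p0 n) else η (iterSeq h η p0 n)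
set_option maxHeartbeats 1000000 in
/-- Common fixed point theorem for a cyclic pair on closed subsets of a
complete partial b-metric space. -/
theorem stmt13 {O : Type*} (d : O → O → ℝ) (s : ℝ)
    (pb : IsPartialBMetric d s) (compl : PBComplete d)
    (C D : Set O) (hC : C.Nonempty) (hD : D.Nonempty)
    (hCcl : PBClosed d C) (hDcl : PBClosed d D) (hCD : (C ∩ D).Nonempty)
    (h η : O → O)
    (hself : MapsTo h (C ∪ D) (C ∪ D)) (ηself : MapsTo η (C ∪ D) (C ∪ D))
    (hCsub : h '' C ⊆ D) (ηDsub : η '' D ⊆ C)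
    (ξ ω : ℝ → ℝ) (Hc : ℝ → ℝ → ℝ)
    (hξc : ContinuousOn ξ (Ici 0)) (hξm : MonotoneOn ξ (Ici 0))
    (hξnn : ∀ t, 0 ≤ t → 0 ≤ ξ t) (hξ0 : ∀ t, 0 ≤ t → (ξ t = 0 ↔ t = 0))
    (hωc : ContinuousOn ω (Ici 0)) (hωnn : ∀ t, 0 ≤ t → 0 ≤ ω t)
    (hω : ∀ u : ℕ → ℝ, (∀ n, 0 ≤ u n) →
      Tendsto (fun n => ω (u n)) atTop (𝓝 0) → Tendsto u atTop (𝓝 0))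
    (hH : CClassFun Hc)
    (contr : ∀ w ∈ C, ∀ v ∈ D,
      ξ (s ^ 3 * d (h w) (η v)) ≤
        Hc (ξ (PBN d s h η id id w v)) (ω (PBN d s h η id id w v))) :
    ∃ p ∈ C ∩ D, h p = p ∧ η p = p ∧
      ∀ q ∈ C ∪ D, h q = q → η q = q → q = p := by
  classical
  obtain ⟨p0, hp0C, hp0D⟩ := hCD
  have hs0 : (0:ℝ) < s := lt_of_lt_of_le one_pos pb.one_le
  have hs3 : (1:ℝ) ≤ s^3 := one_le_pow₀ pb.one_le
  set x : ℕ → O := iterSeq h η p0 with hxdef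
  have hxe : ∀ k, x (2*k+1) = h (x (2*k)) := by
    intro k
    show iterSeq h η p0 (2*k+1) = h (iterSeq h η p0 (2*k))
    rw [iterSeq, if_pos (even_two_mul k)]
  have hxo : ∀ k, x (2*k+2) = η (x (2*k+1)) := by
    intro k
    show iterSeq h η p0 (2*k+1+1) = η (iterSeq h η p0 (2*k+1))
    rw [iterSeq, if_neg (by simp [Nat.even_add_one, parity_simps])]
  have mem : ∀ k, x (2*k) ∈ C ∧ x (2*k+1) ∈ D := by
    intro k; induction k with
    | zero =>
      refine ⟨hp0C, ?_⟩
      rw [hxe 0]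
      exact hCsub ⟨x 0, hp0C, rfl⟩
    | succ n ih =>
      have hC2 : x (2*(n+1)) ∈ C := by
        rw [show 2*(n+1) = 2*n+2 by ring, hxo n]
        exact ηDsub ⟨x (2*n+1), ih.2, rfl⟩
      exact ⟨hC2, by rw [hxe (n+1)]; exact hCsub ⟨x (2*(n+1)), hC2, rfl⟩⟩
  set δ : ℕ → ℝ := fun n => d (x n) (x (n+1)) with hδdef
  have δnn : ∀ n, 0 ≤ δ n := fun n => pb.nonneg _ _
  have hξmono : ∀ a b : ℝ, 0 ≤ a → a ≤ b → ξ a ≤ ξ b := fun a b ha hab =>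
    hξm (mem_Ici.mpr ha) (mem_Ici.mpr (ha.trans hab)) hab
  have LZ : ∀ r : ℝ, 0 ≤ r → ξ r ≤ Hc (ξ r) (ω r) → r = 0 := by
    intro r hr hle
    have hHle := (hH.2.1 (ξ r) (ω r) (hξnn r hr) (hωnn r hr)).2
    have heq : Hc (ξ r) (ω r) = ξ r := le_antisymm hHle hle
    rcases hH.2.2 (ξ r) (ω r) (hξnn r hr) (hωnn r hr) heq with h0 | h0
    · exact (hξ0 r hr).1 h0
    · have ht : Tendsto (fun _ : ℕ => r) atTop (𝓝 0) :=
        hω (fun _ => r) (fun _ => hr) (by simpa [h0] using (tendsto_const_nhds : Tendsto (fun _ : ℕ => (0:ℝ)) atTop (𝓝 0)))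
      exact (tendsto_nhds_unique ht tendsto_const_nhds).symm
  have keyStep : ∀ a b Nv : ℝ, 0 ≤ a → 0 ≤ b → a ≤ Nv → Nv ≤ max b a →
      ξ (s^3*a) ≤ Hc (ξ Nv) (ω Nv) → s^3*a ≤ b := by
    intro a b Nv ha hb haN hNm hcon
    have hNv0 : 0 ≤ Nv := ha.trans haN
    have ha3 : a ≤ s^3*a := le_mul_of_one_le_left ha hs3
    by_contra hlt
    push_neg at hlt
    rcases le_or_gt (s^3*a) Nv with hc | hc
    · have hmax : max b a = a := by
        rcases max_cases b a with ⟨h1,h2⟩ | ⟨h1,h2⟩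
        · rw [h1] at hNm; linarith
        · exact h1
      rw [hmax] at hNm
      have hNa : Nv = a := le_antisymm hNm haN
      have hsa : s^3*a = a := le_antisymm (hc.trans hNa.le) ha3
      rw [hNa, hsa] at hcon
      have ha0 := LZ a ha hcon
      rw [ha0] at hlt; simp at hlt; linarith
    · have h1 : ξ Nv ≤ ξ (s^3*a) := hξmono _ _ hNv0 hc.le
      have h2 : ξ Nv ≤ Hc (ξ Nv) (ω Nv) := h1.trans hcon
      have hN0 := LZ Nv hNv0 h2
      have ha0 : a = 0 := le_antisymm (hN0 ▸ haN) ha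
      rw [ha0] at hlt; simp at hlt; linarith
  set M : ℕ → ℝ := fun n => if Even n then PBN d s h η id id (x n) (x (n+1))
      else PBN d s h η id id (x (n+1)) (x n) with hMdef
  have h2s : (0:ℝ) < 2*s := by linarith
  have core : ∀ n, δ (n+1) ≤ M n ∧ M n ≤ max (δ n) (δ (n+1)) ∧
      ξ (s^3 * δ (n+1)) ≤ Hc (ξ (M n)) (ω (M n)) := by
    intro n
    rcases Nat.even_or_odd n with he | ho
    · obtain ⟨k, hk⟩ := he
      have hn : n = 2*k := by omega
      subst hn
      obtain ⟨hw, hv⟩ := mem k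
      have hMv : M (2*k) = PBN d s h η id id (x (2*k)) (x (2*k+1)) := by
        simp only [hMdef]
        rw [if_pos (even_two_mul k)]
      have hPBN : PBN d s h η id id (x (2*k)) (x (2*k+1)) =
          max (max (d (x (2*k)) (x (2*k+1))) (d (x (2*k+1)) (x (2*k))))
              (max (d (x (2*k+1)) (x (2*k+2)))
                ((d (x (2*k)) (x (2*k+2)) + d (x (2*k+1)) (x (2*k+1))) / (2*s))) := by
        simp only [PBN, id_eq, ← hxe k, ← hxo k]
      refine ⟨?_, ?_, ?_⟩
      · rw [hMv, hPBN]
        exact le_max_of_le_right (le_max_left _ _)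
      · rw [hMv, hPBN]
        refine max_le (max_le (le_max_left _ _) ?_) (max_le (le_max_right _ _) ?_)
        · exact (pb.symm (x (2*k+1)) (x (2*k))).le.trans (le_max_left _ _)
        · show (d (x (2*k)) (x (2*k+2)) + d (x (2*k+1)) (x (2*k+1))) / (2*s) ≤
            max (d (x (2*k)) (x (2*k+1))) (d (x (2*k+1)) (x (2*k+2)))
          rw [div_le_iff₀ h2s]
          have htri := pb.triangle (x (2*k)) (x (2*k+2)) (x (2*k+1))
          have hm1 := le_max_left (d (x (2*k)) (x (2*k+1))) (d (x (2*k+1)) (x (2*k+2)))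
          have hm2 := le_max_right (d (x (2*k)) (x (2*k+1))) (d (x (2*k+1)) (x (2*k+2)))
          have h2 : s * (d (x (2*k)) (x (2*k+1)) + d (x (2*k+1)) (x (2*k+2))) ≤
              s * (2 * max (d (x (2*k)) (x (2*k+1))) (d (x (2*k+1)) (x (2*k+2)))) := by
            apply mul_le_mul_of_nonneg_left _ hs0.le
            linarith
          linarith [htri, h2]
      · have hcon := contr (x (2*k)) hw (x (2*k+1)) hv
        rw [← hxe k, ← hxo k] at hcon
        rw [hMv]
        exact hcon
    · obtain ⟨k, hk⟩ := ho
      subst hk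
      have hxe' : x (2*k+3) = h (x (2*k+2)) := hxe (k+1)
      have hMv : M (2*k+1) = PBN d s h η id id (x (2*k+2)) (x (2*k+1)) := by
        simp only [hMdef]
        rw [if_neg (by simp [Nat.even_add_one, parity_simps])]
      have hPBN : PBN d s h η id id (x (2*k+2)) (x (2*k+1)) =
          max (max (d (x (2*k+2)) (x (2*k+1))) (d (x (2*k+3)) (x (2*k+2))))
              (max (d (x (2*k+1)) (x (2*k+2)))
                ((d (x (2*k+2)) (x (2*k+2)) + d (x (2*k+3)) (x (2*k+1))) / (2*s))) := by
        simp only [PBN, id_eq, ← hxe', ← hxo k]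
      refine ⟨?_, ?_, ?_⟩
      · rw [hMv, hPBN]
        exact le_max_of_le_left ((pb.symm (x (2*k+2)) (x (2*k+3))).le.trans (le_max_right _ _))
      · rw [hMv, hPBN]
        refine max_le (max_le ?_ ?_) (max_le (le_max_left _ _) ?_)
        · exact (pb.symm (x (2*k+2)) (x (2*k+1))).le.trans (le_max_left _ _)
        · exact (pb.symm (x (2*k+3)) (x (2*k+2))).le.trans (le_max_right _ _)
        · show (d (x (2*k+2)) (x (2*k+2)) + d (x (2*k+3)) (x (2*k+1))) / (2*s) ≤
            max (d (x (2*k+1)) (x (2*k+2))) (d (x (2*k+2)) (x (2*k+3)))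
          rw [div_le_iff₀ h2s]
          have htri := pb.triangle (x (2*k+3)) (x (2*k+1)) (x (2*k+2))
          have hsym1 := pb.symm (x (2*k+3)) (x (2*k+2))
          have hsym2 := pb.symm (x (2*k+2)) (x (2*k+1))
          rw [hsym1, hsym2] at htri
          have hm1 := le_max_left (d (x (2*k+1)) (x (2*k+2))) (d (x (2*k+2)) (x (2*k+3)))
          have hm2 := le_max_right (d (x (2*k+1)) (x (2*k+2))) (d (x (2*k+2)) (x (2*k+3)))
          have h2 : s * (d (x (2*k+2)) (x (2*k+3)) + d (x (2*k+1)) (x (2*k+2))) ≤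
              s * (2 * max (d (x (2*k+1)) (x (2*k+2))) (d (x (2*k+2)) (x (2*k+3)))) := by
            apply mul_le_mul_of_nonneg_left _ hs0.le
            linarith
          linarith [htri, h2]
      · have hcon := contr (x (2*k+2)) (mem (k+1)).1 (x (2*k+1)) (mem k).2
        rw [← hxe', ← hxo k, pb.symm (x (2*k+3)) (x (2*k+2))] at hcon
        rw [hMv]
        exact hcon
  have step : ∀ n, s^3 * δ (n+1) ≤ δ n := fun n =>
    keyStep (δ (n+1)) (δ n) (M n) (δnn _) (δnn _) (core n).1 (core n).2.1 (core n).2.2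
  have hdec : ∀ n, δ (n+1) ≤ δ n := fun n =>
    (le_mul_of_one_le_left (δnn _) hs3).trans (step n)
  have hanti : Antitone δ := antitone_nat_of_succ_le hdec
  have hbdd : BddBelow (Set.range δ) := ⟨0, fun r ⟨n, hn⟩ => hn ▸ δnn n⟩
  have hδL : Tendsto δ atTop (𝓝 (⨅ n, δ n)) := tendsto_atTop_ciInf hanti hbdd
  have hL0 : 0 ≤ ⨅ n, δ n := le_ciInf fun n => δnn n
  have tξ : ∀ (u : ℕ → ℝ) (a : ℝ), 0 ≤ a → (∀ n, 0 ≤ u n) → Tendsto u atTop (𝓝 a) →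
      Tendsto (fun n => ξ (u n)) atTop (𝓝 (ξ a)) := fun u a ha hu hua =>
    (hξc a (mem_Ici.mpr ha)).tendsto.comp
      (tendsto_nhdsWithin_iff.mpr ⟨hua, Eventually.of_forall fun n => mem_Ici.mpr (hu n)⟩)
  have tω : ∀ (u : ℕ → ℝ) (a : ℝ), 0 ≤ a → (∀ n, 0 ≤ u n) → Tendsto u atTop (𝓝 a) →
      Tendsto (fun n => ω (u n)) atTop (𝓝 (ω a)) := fun u a ha hu hua =>
    (hωc a (mem_Ici.mpr ha)).tendsto.comp
      (tendsto_nhdsWithin_iff.mpr ⟨hua, Eventually.of_forall fun n => mem_Ici.mpr (hu n)⟩)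
  have tH : ∀ (u v : ℕ → ℝ) (a b : ℝ), 0 ≤ a → 0 ≤ b → (∀ n, 0 ≤ u n) → (∀ n, 0 ≤ v n) →
      Tendsto u atTop (𝓝 a) → Tendsto v atTop (𝓝 b) →
      Tendsto (fun n => Hc (u n) (v n)) atTop (𝓝 (Hc a b)) := by
    intro u v a b ha hb hu hv hua hvb
    have := (hH.1 (a, b) ⟨ha, hb⟩).tendsto.comp
      (tendsto_nhdsWithin_iff.mpr ⟨hua.prodMk_nhds hvb,
        Eventually.of_forall fun n => (⟨hu n, hv n⟩ : (u n, v n) ∈ {p : ℝ × ℝ | 0 ≤ p.1 ∧ 0 ≤ p.2})⟩)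
    exact this
  have hMnn : ∀ n, 0 ≤ M n := fun n => (δnn _).trans ((core n).1)
  have hMlim : Tendsto M atTop (𝓝 (⨅ n, δ n)) := by
    have hup : ∀ n, M n ≤ δ n := fun n => le_of_le_of_eq ((core n).2.1) (max_eq_left (hdec n))
    exact tendsto_of_tendsto_of_tendsto_of_le_of_le
      (hδL.comp (tendsto_add_atTop_nat 1)) hδL (fun n => (core n).1) hup
  have hδ0 : Tendsto δ atTop (𝓝 0) := by
    have hL : (⨅ n, δ n) = 0 := by
      apply LZ _ hL0
      have h1 : ∀ n, ξ (δ (n+1)) ≤ Hc (ξ (M n)) (ω (M n)) := fun n =>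
        (hξmono _ _ (δnn _) (le_mul_of_one_le_left (δnn _) hs3)).trans (core n).2.2
      exact le_of_tendsto_of_tendsto'
        (tξ (fun n => δ (n+1)) _ hL0 (fun n => δnn _) (hδL.comp (tendsto_add_atTop_nat 1)))
        (tH (fun n => ξ (M n)) (fun n => ω (M n)) (ξ (⨅ n, δ n)) (ω (⨅ n, δ n))
          (hξnn _ hL0) (hωnn _ hL0) (fun n => hξnn _ (hMnn n)) (fun n => hωnn _ (hMnn n))
          (tξ M _ hL0 hMnn hMlim) (tω M _ hL0 hMnn hMlim)) h1
    rw [← hL]; exact hδL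
  have hCauchy : Tendsto (fun p : ℕ × ℕ => d (x p.1) (x p.2)) atTop (𝓝 0) := by
    have hmin : Tendsto (fun p : ℕ × ℕ => min p.1 p.2) atTop atTop := by
      rw [Filter.tendsto_atTop]
      intro b
      refine eventually_atTop.mpr ⟨(b, b), fun p hp => le_min hp.1 hp.2⟩
    rcases eq_or_lt_of_le pb.one_le with hs1 | hs1
    · -- s = 1 case
      have hs1' : s = 1 := hs1.symm
      subst hs1'
      have tri1 : ∀ a b c : O, d a c ≤ d a b + d b c := by
        intro a b c
        have h1 := pb.triangle a c b
        have h2 := pb.nonneg b b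
        linarith
      have symmT : ∀ (u v : ℕ → ℕ) (a : ℝ),
          Tendsto (fun j => d (x (u j)) (x (v j))) atTop (𝓝 a) →
          Tendsto (fun j => d (x (v j)) (x (u j))) atTop (𝓝 a) := by
        intro u v a ha
        have heq : (fun j => d (x (v j)) (x (u j))) = fun j => d (x (u j)) (x (v j)) :=
          funext fun j => pb.symm _ _
        rw [heq]; exact ha
      have EC : ∀ ε : ℝ, 0 < ε → ∃ N : ℕ, ∀ m n : ℕ, N ≤ m → m < n →
          d (x (2*m)) (x (2*n)) < ε := by
        by_contra hcon
        push_neg at hcon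
        obtain ⟨ε, hε, hbad⟩ := hcon
        obtain ⟨J, hJ⟩ := eventually_atTop.mp (hδ0.eventually (gt_mem_nhds hε))
        choose m' n' hm' hmn' hd' using hbad
        set mj : ℕ → ℕ := fun j => m' (max j J) with hmjdef
        have hmjJ : ∀ j, J ≤ mj j := fun j => (le_max_right j J).trans (hm' _)
        have hmjj : ∀ j, j ≤ mj j := fun j => (le_max_left j J).trans (hm' _)
        have exn : ∀ j, ∃ k, mj j < k ∧ ε ≤ d (x (2*mj j)) (x (2*k)) := fun j =>
          ⟨n' (max j J), hmn' _, hd' _⟩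
        set nj : ℕ → ℕ := fun j => Nat.find (exn j) with hnjdef
        have hnj1 : ∀ j, mj j < nj j := fun j => (Nat.find_spec (exn j)).1
        have hnj2 : ∀ j, ε ≤ d (x (2*mj j)) (x (2*nj j)) := fun j => (Nat.find_spec (exn j)).2
        set E : ℕ → ℝ := fun j => δ (2*j) with hEdef
        have hE : Tendsto E atTop (𝓝 0) :=
          hδ0.comp (Filter.tendsto_atTop.mpr (fun b => eventually_atTop.mpr ⟨b, fun j hj => by omega⟩))
        have hEb : ∀ j i, 2*j ≤ i → δ i ≤ E j := fun j i hi => hanti hi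
        have hE0 : ∀ j, 0 ≤ E j := fun j => δnn _
        have hprev : ∀ j, d (x (2*mj j)) (x (2*(nj j - 1))) < ε := by
          intro j
          rcases Nat.lt_or_ge (mj j) (nj j - 1) with hgt | hle
          · have hfm := Nat.find_min (exn j) (show nj j - 1 < nj j by have := hnj1 j; omega)
            push_neg at hfm
            exact lt_of_not_ge (fun hc => absurd (hfm hgt) (not_lt.mpr hc))
          · have heq : nj j - 1 = mj j := by have := hnj1 j; omega
            rw [heq]
            calc d (x (2*mj j)) (x (2*mj j)) ≤ δ (2*mj j) := pb.self_le _ _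
              _ < ε := hJ _ (by have := hmjJ j; omega)
        -- g tends to ε
        have hgup : ∀ j, d (x (2*mj j)) (x (2*nj j)) ≤ ε + (E j + E j) := by
          intro j
          have h1 := tri1 (x (2*mj j)) (x (2*(nj j - 1))) (x (2*nj j))
          have h2 := tri1 (x (2*(nj j - 1))) (x (2*(nj j - 1)+1)) (x (2*nj j))
          have hix : 2*nj j = 2*(nj j - 1) + 2 := by have := hnj1 j; omega
          rw [hix] at h1 h2 ⊢
          have e1 : δ (2*(nj j -1)) ≤ E j := hEb j _ (by have := hmjj j; have := hnj1 j; omega)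
          have e2 : δ (2*(nj j -1)+1) ≤ E j := hEb j _ (by have := hmjj j; have := hnj1 j; omega)
          have r1 : δ (2*(nj j -1)) = d (x (2*(nj j -1))) (x (2*(nj j -1)+1)) := rfl
          have r2 : δ (2*(nj j -1)+1) = d (x (2*(nj j -1)+1)) (x (2*(nj j -1)+2)) := rfl
          have hp := hprev j
          linarith
        have hg : Tendsto (fun j => d (x (2*mj j)) (x (2*nj j))) atTop (𝓝 ε) := by
          apply tendsto_of_tendsto_of_tendsto_of_le_of_le (g := fun _ => ε)
            (h := fun j => ε + (E j + E j)) tendsto_const_nhds _ hnj2 hgup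
          have : Tendsto (fun j => ε + (E j + E j)) atTop (𝓝 (ε + (0+0))) :=
            tendsto_const_nhds.add (hE.add hE)
          simpa using this
        have pert : ∀ (u v : ℕ → ℕ) (a : ℝ),
            Tendsto (fun j => d (x (u j)) (x (v j))) atTop (𝓝 a) →
            (∀ j, δ (v j) ≤ E j) →
            Tendsto (fun j => d (x (u j)) (x (v j + 1))) atTop (𝓝 a) := by
          intro u v a ha hb
          apply tendsto_of_tendsto_of_tendsto_of_le_of_le
            (g := fun j => d (x (u j)) (x (v j)) - E j)
            (h := fun j => d (x (u j)) (x (v j)) + E j)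
          · simpa using ha.sub hE
          · simpa using ha.add hE
          · intro j
            dsimp only
            have t1 := tri1 (x (u j)) (x (v j + 1)) (x (v j))
            have hsym := pb.symm (x (v j + 1)) (x (v j))
            have r1 : δ (v j) = d (x (v j)) (x (v j + 1)) := rfl
            linarith [hb j]
          · intro j
            dsimp only
            have t2 := tri1 (x (u j)) (x (v j)) (x (v j + 1))
            have r1 : δ (v j) = d (x (v j)) (x (v j + 1)) := rfl
            linarith [hb j]
        have hA : Tendsto (fun j => d (x (2*mj j)) (x (2*nj j + 1))) atTop (𝓝 ε) :=
          pert _ (fun j => 2*nj j) ε hg (fun j => hEb j (2*nj j) (by have := hmjj j; have := hnj1 j; omega))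
        have hB : Tendsto (fun j => d (x (2*mj j + 1)) (x (2*nj j + 1))) atTop (𝓝 ε) := by
          apply symmT
          apply pert _ (fun j => 2*mj j) ε (symmT _ _ _ hA)
          exact fun j => hEb j (2*mj j) (by have := hmjj j; omega)
        have hCc : Tendsto (fun j => d (x (2*mj j)) (x (2*nj j + 1 + 1))) atTop (𝓝 ε) :=
          pert _ (fun j => 2*nj j + 1) ε hA
            (fun j => hEb j (2*nj j + 1) (by have := hmjj j; have := hnj1 j; omega))
        have hL : Tendsto (fun j => d (x (2*mj j + 1)) (x (2*nj j + 1 + 1))) atTop (𝓝 ε) :=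
          pert _ (fun j => 2*nj j + 1) ε hB
            (fun j => hEb j (2*nj j + 1) (by have := hmjj j; have := hnj1 j; omega))
        have hdm : Tendsto (fun j => d (x (2*mj j + 1)) (x (2*mj j))) atTop (𝓝 0) := by
          apply tendsto_of_tendsto_of_tendsto_of_le_of_le (g := fun _ => (0:ℝ)) (h := E)
            tendsto_const_nhds hE (fun j => pb.nonneg _ _)
          intro j
          dsimp only
          have r1 : δ (2*mj j) = d (x (2*mj j)) (x (2*mj j + 1)) := rfl
          have := hEb j (2*mj j) (by have := hmjj j; omega)
          rw [pb.symm]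
          linarith
        have hdn : Tendsto (fun j => δ (2*nj j + 1)) atTop (𝓝 0) := by
          apply tendsto_of_tendsto_of_tendsto_of_le_of_le (g := fun _ => (0:ℝ)) (h := E)
            tendsto_const_nhds hE (fun j => δnn _)
          exact fun j => hEb j (2*nj j + 1) (by have := hmjj j; have := hnj1 j; omega)
        -- the N sequence
        set Nq : ℕ → ℝ := fun j => PBN d 1 h η id id (x (2*mj j)) (x (2*nj j + 1)) with hNqdef
        have hNqeq : ∀ j, Nq j =
            max (max (d (x (2*mj j)) (x (2*nj j + 1))) (d (x (2*mj j + 1)) (x (2*mj j))))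
              (max (δ (2*nj j + 1))
                ((d (x (2*mj j)) (x (2*nj j + 1 + 1)) + d (x (2*mj j + 1)) (x (2*nj j + 1))) / (2*1))) := by
          intro j
          simp only [hNqdef, PBN, id_eq, ← hxe (mj j), ← hxo (nj j)]
          rfl
        have hNq : Tendsto Nq atTop (𝓝 ε) := by
          have hlim : Tendsto (fun j =>
              max (max (d (x (2*mj j)) (x (2*nj j + 1))) (d (x (2*mj j + 1)) (x (2*mj j))))
                (max (δ (2*nj j + 1))
                  ((d (x (2*mj j)) (x (2*nj j + 1 + 1)) + d (x (2*mj j + 1)) (x (2*nj j + 1))) / (2*1))))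
              atTop (𝓝 (max (max ε 0) (max 0 ((ε + ε)/(2*1))))) := by
            exact (hA.max hdm).max (hdn.max ((hCc.add hB).div_const (2*1)))
          have : max (max ε 0) (max 0 ((ε + ε)/(2*1))) = ε := by
            rw [max_eq_left hε.le, max_eq_right (by linarith : (0:ℝ) ≤ (ε+ε)/(2*1))]
            rw [show (ε+ε)/(2*1) = ε by ring, max_self]
          rw [this] at hlim
          have heqf : Nq = fun j =>
              max (max (d (x (2*mj j)) (x (2*nj j + 1))) (d (x (2*mj j + 1)) (x (2*mj j))))
                (max (δ (2*nj j + 1))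
                  ((d (x (2*mj j)) (x (2*nj j + 1 + 1)) + d (x (2*mj j + 1)) (x (2*nj j + 1))) / (2*1))) :=
            funext hNqeq
          rw [heqf]; exact hlim
        have hNqnn : ∀ j, 0 ≤ Nq j := by
          intro j
          rw [hNqeq j]
          exact le_max_of_le_right (le_max_of_le_left (δnn _))
        have hLnn : ∀ j, 0 ≤ d (x (2*mj j + 1)) (x (2*nj j + 1 + 1)) := fun j => pb.nonneg _ _
        have hconj : ∀ j, ξ (d (x (2*mj j + 1)) (x (2*nj j + 1 + 1))) ≤ Hc (ξ (Nq j)) (ω (Nq j)) := by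
          intro j
          have hc := contr (x (2*mj j)) (mem (mj j)).1 (x (2*nj j + 1)) (mem (nj j)).2
          rw [← hxe (mj j), ← hxo (nj j)] at hc
          simpa using hc
        have hfin : ξ ε ≤ Hc (ξ ε) (ω ε) := by
          refine le_of_tendsto_of_tendsto'
            (tξ _ ε hε.le hLnn hL)
            (tH (fun j => ξ (Nq j)) (fun j => ω (Nq j)) (ξ ε) (ω ε)
              (hξnn _ hε.le) (hωnn _ hε.le)
              (fun j => hξnn _ (hNqnn j)) (fun j => hωnn _ (hNqnn j))
              (tξ Nq ε hε.le hNqnn hNq) (tω Nq ε hε.le hNqnn hNq)) hconj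
        have := LZ ε hε.le hfin
        linarith
      rw [Metric.tendsto_nhds]
      intro ε hε
      obtain ⟨N₁, hN₁⟩ := EC (ε/4) (by linarith)
      obtain ⟨J, hJ⟩ := eventually_atTop.mp (hδ0.eventually (gt_mem_nhds (show (0:ℝ) < ε/4 by linarith)))
      have ECle : ∀ k l : ℕ, max N₁ J ≤ k → k ≤ l → d (x (2*k)) (x (2*l)) < ε/4 := by
        intro k l hk hkl
        rcases eq_or_lt_of_le hkl with rfl | hlt
        · calc d (x (2*k)) (x (2*k)) ≤ δ (2*k) := pb.self_le _ _
            _ < ε/4 := hJ _ (by have := le_max_right N₁ J; omega)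
        · exact hN₁ k l (le_trans (le_max_left _ _) hk) hlt
      have hmain : ∀ a b : ℕ, 2 * max N₁ J + 2 ≤ a → a ≤ b → d (x a) (x b) < ε := by
        intro a b ha hab
        have hJa : J ≤ a := by have := le_max_right N₁ J; omega
        have hJb : J ≤ b := by omega
        have hfirst : d (x a) (x (2*((a+1)/2))) ≤ δ a := by
          rcases Nat.even_or_odd a with ⟨t, ht⟩ | ⟨t, ht⟩
          · rw [show 2*((a+1)/2) = a by omega]
            exact pb.self_le _ _
          · rw [show 2*((a+1)/2) = a+1 by omega]
        have hlast : d (x (2*((b+1)/2))) (x b) ≤ δ b := by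
          rcases Nat.even_or_odd b with ⟨t, ht⟩ | ⟨t, ht⟩
          · rw [show 2*((b+1)/2) = b by omega]
            exact pb.self_le _ _
          · rw [show 2*((b+1)/2) = b+1 by omega, pb.symm]
        have hmid : d (x (2*((a+1)/2))) (x (2*((b+1)/2))) < ε/4 := by
          apply ECle
          · have h1 := le_max_left N₁ J; have h2 := le_max_right N₁ J; omega
          · omega
        have t1 := tri1 (x a) (x (2*((a+1)/2))) (x b)
        have t2 := tri1 (x (2*((a+1)/2))) (x (2*((b+1)/2))) (x b)
        have hda := hJ a hJa
        have hdb := hJ b hJb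
        linarith
      refine eventually_atTop.mpr ⟨(2 * max N₁ J + 2, 2 * max N₁ J + 2), fun p hp => ?_⟩
      rw [Real.dist_eq, sub_zero, abs_of_nonneg (pb.nonneg _ _)]
      rcases le_total p.1 p.2 with hab | hab
      · exact hmain p.1 p.2 hp.1 hab
      · rw [pb.symm]
        exact hmain p.2 p.1 hp.2 hab
    · -- geometric case 1 < s
      set q : ℝ := (s^3)⁻¹ with hqdef
      have hs3' : (1:ℝ) < s^3 := one_lt_pow₀ hs1 three_ne_zero
      have hq0 : 0 < q := inv_pos.mpr (by linarith)
      have hq1 : q < 1 := inv_lt_one_of_one_lt₀ hs3'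
      have geo : ∀ n, δ n ≤ δ 0 * q^n := by
        intro n
        induction n with
        | zero => simp
        | succ m ih =>
          have h1 : s^3 * δ (m+1) ≤ δ m := step m
          have h2 : δ (m+1) ≤ δ m * q := by
            rw [hqdef, ← div_eq_mul_inv, le_div_iff₀ (by linarith : (0:ℝ) < s^3)]
            linarith [h1]
          calc δ (m+1) ≤ δ m * q := h2
            _ ≤ (δ 0 * q^m) * q := by
                apply mul_le_mul_of_nonneg_right ih hq0.le
            _ = δ 0 * q^(m+1) := by ring
      set B : ℝ := s * δ 0 / (1 - (s⁻¹)^2) with hBdef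
      have hr1 : (s⁻¹ : ℝ) < 1 := inv_lt_one_of_one_lt₀ hs1
      have hr0 : (0:ℝ) < s⁻¹ := inv_pos.mpr hs0
      have hden : (0:ℝ) < 1 - (s⁻¹)^2 := by nlinarith
      have hB0 : 0 ≤ B := div_nonneg (mul_nonneg hs0.le (δnn 0)) hden.le
      have hδ0B : δ 0 ≤ B := by
        rw [hBdef, le_div_iff₀ hden]
        nlinarith [δnn 0, pb.one_le]
      have hkey : s * δ 0 + s * B * q = B := by
        have h1 : B * (1 - s⁻¹^2) = s * δ 0 := by
          rw [hBdef]; exact div_mul_cancel₀ _ hden.ne'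
        have h2 : s * q = s⁻¹^2 := by
          rw [hqdef]; field_simp
        have h3 : s * B * q = B * (s * q) := by ring
        rw [h3, h2]; linarith [h1]
      have claim : ∀ k m, d (x m) (x (m+k)) ≤ B * q^m := by
        intro k
        induction k with
        | zero =>
          intro m
          calc d (x m) (x (m+0)) ≤ δ m := pb.self_le _ _
            _ ≤ δ 0 * q^m := geo m
            _ ≤ B * q^m := mul_le_mul_of_nonneg_right hδ0B (by positivity)
        | succ k ih =>
          intro m
          rw [show m + (k+1) = m+1+k by omega]
          have htri := pb.triangle (x m) (x (m+1+k)) (x (m+1))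
          have h2 := ih (m+1)
          have h1 := geo m
          have hself := pb.nonneg (x (m+1)) (x (m+1))
          have hq : s * δ m ≤ s * (δ 0 * q^m) := mul_le_mul_of_nonneg_left h1 hs0.le
          have hq2 : s * d (x (m+1)) (x (m+1+k)) ≤ s * (B * q^(m+1)) :=
            mul_le_mul_of_nonneg_left h2 hs0.le
          have hqpow : (0:ℝ) < q^m := by positivity
          have hfin : s * (δ 0 * q^m) + s * (B * q^(m+1)) ≤ B * q^m := by
            have : s * (δ 0 * q^m) + s * (B * q^(m+1)) = (s * δ 0 + s * B * q) * q^m := by ring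
            rw [this, hkey]
          linarith [htri]
      have hboth : ∀ p : ℕ × ℕ, d (x p.1) (x p.2) ≤ B * q^(min p.1 p.2) := by
        intro ⟨m, n⟩
        rcases le_total m n with hmn | hmn
        · have := claim (n - m) m
          rw [show m + (n - m) = n by omega] at this
          simpa [min_eq_left hmn] using this
        · have := claim (m - n) n
          rw [show n + (m - n) = m by omega] at this
          rw [pb.symm]
          simpa [min_eq_right hmn] using this
      have hup : Tendsto (fun p : ℕ × ℕ => B * q^(min p.1 p.2)) atTop (𝓝 0) := by
        have hp : Tendsto (fun k : ℕ => B * q^k) atTop (𝓝 (B * 0)) :=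
          (tendsto_pow_atTop_nhds_zero_of_lt_one hq0.le hq1).const_mul B
        rw [mul_zero] at hp
        exact hp.comp hmin
      exact tendsto_of_tendsto_of_tendsto_of_le_of_le tendsto_const_nhds hup
        (fun p => pb.nonneg _ _) hboth
  obtain ⟨z, hz1, hz2⟩ := compl x ⟨0, hCauchy⟩
  have hdzz : d z z = 0 := tendsto_nhds_unique hz1 hCauchy
  have hz0 : Tendsto (fun m => d (x m) z) atTop (𝓝 0) := by
    have h2 := hz2
    unfold PBConv at h2
    rwa [hdzz] at h2
  have t2k : Tendsto (fun k : ℕ => 2*k) atTop atTop :=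
    Filter.tendsto_atTop.mpr (fun b => eventually_atTop.mpr ⟨b, fun j hj => by omega⟩)
  have t2k1 : Tendsto (fun k : ℕ => 2*k+1) atTop atTop :=
    Filter.tendsto_atTop.mpr (fun b => eventually_atTop.mpr ⟨b, fun j hj => by omega⟩)
  have t2k2 : Tendsto (fun k : ℕ => 2*k+2) atTop atTop :=
    Filter.tendsto_atTop.mpr (fun b => eventually_atTop.mpr ⟨b, fun j hj => by omega⟩)
  have zC : z ∈ C := hCcl z ⟨fun k => x (2*k), fun k => (mem k).1, by
    unfold PBConv; rw [hdzz]; exact hz0.comp t2k⟩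
  have zD : z ∈ D := hDcl z ⟨fun k => x (2*k+1), fun k => (mem k).2, by
    unfold PBConv; rw [hdzz]; exact hz0.comp t2k1⟩
  have eqz : ∀ w : O, d w z = 0 → w = z := by
    intro w h0
    apply (pb.eq_iff w z).2
    constructor
    · have h1 : d w w ≤ d w z := pb.self_le w z
      have h2 : 0 ≤ d w w := pb.nonneg w w
      linarith
    · rw [h0, hdzz]
  have hs2 : (1:ℝ) ≤ s^2 := by nlinarith [pb.one_le]
  have hc1 : Tendsto (fun n : ℕ => d (x (2*n+1)) z) atTop (𝓝 0) := hz0.comp t2k1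
  have hc2 : Tendsto (fun n : ℕ => d (x (2*n+2)) z) atTop (𝓝 0) := hz0.comp t2k2
  have hc0 : Tendsto (fun n : ℕ => d (x (2*n)) z) atTop (𝓝 0) := hz0.comp t2k
  have hfixh : h z = z := by
    set t := d (h z) z with htdef
    have ht0 : 0 ≤ t := pb.nonneg _ _
    rcases eq_or_lt_of_le ht0 with ht | ht
    · exact eqz _ ht.symm
    exfalso
    have hts : 0 < t * s := mul_pos ht hs0
    have hev1 : ∀ᶠ n in atTop, d (x (2*n+1)) z < t := hc1.eventually (gt_mem_nhds ht)
    have hev2 : ∀ᶠ n in atTop, δ (2*n+1) < t := (hδ0.comp t2k1).eventually (gt_mem_nhds ht)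
    have hev3 : ∀ᶠ n in atTop, d (x (2*n+2)) z + s * d (x (2*n+1)) z < t * s := by
      have hlim : Tendsto (fun n : ℕ => d (x (2*n+2)) z + s * d (x (2*n+1)) z)
          atTop (𝓝 (0 + s*0)) := hc2.add (hc1.const_mul s)
      simp only [mul_zero, add_zero] at hlim
      exact hlim.eventually (gt_mem_nhds hts)
    have hNt : ∀ᶠ n in atTop, PBN d s h η id id z (x (2*n+1)) = t := by
      filter_upwards [hev1, hev2, hev3] with n e1 e2 e3
      have hPB : PBN d s h η id id z (x (2*n+1)) =
          max (max (d z (x (2*n+1))) (d (h z) z))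
            (max (δ (2*n+1)) ((d z (x (2*n+2)) + d (h z) (x (2*n+1))) / (2*s))) := by
        simp only [PBN, id_eq, ← hxo n]
        rfl
      rw [hPB]
      apply le_antisymm
      · refine max_le (max_le ?_ htdef.ge) (max_le e2.le ?_)
        · rw [pb.symm]; exact e1.le
        · rw [div_le_iff₀ h2s]
          have htr := pb.triangle (h z) (x (2*n+1)) z
          rw [hdzz] at htr
          have hsy1 : d z (x (2*n+2)) = d (x (2*n+2)) z := pb.symm _ _
          have hsy2 : d z (x (2*n+1)) = d (x (2*n+1)) z := pb.symm _ _
          rw [hsy1]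
          rw [hsy2, ← htdef] at htr
          linarith [e3, htr]
      · rw [htdef]
        exact le_max_of_le_left (le_max_right _ _)
    have hmax : Tendsto (fun n : ℕ => s^3 * max 0 (t/s - d (x (2*n+2)) z))
        atTop (𝓝 (s^3 * (t/s))) := by
      have h1 : Tendsto (fun n : ℕ => max 0 (t/s - d (x (2*n+2)) z))
          atTop (𝓝 (max 0 (t/s - 0))) :=
        (tendsto_const_nhds : Tendsto (fun _ : ℕ => (0:ℝ)) _ _).max (tendsto_const_nhds.sub hc2)
      rw [sub_zero, max_eq_right (div_nonneg ht.le hs0.le)] at h1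
      exact h1.const_mul _
    have hRle : ∀ᶠ n in atTop, ξ (s^3 * max 0 (t/s - d (x (2*n+2)) z)) ≤ Hc (ξ t) (ω t) := by
      filter_upwards [hNt] with n hN
      have hc := contr z zC (x (2*n+1)) (mem n).2
      rw [hN, ← hxo n] at hc
      refine le_trans ?_ hc
      apply hξmono
      · exact mul_nonneg (pow_nonneg hs0.le 3) (le_max_left _ _)
      · apply mul_le_mul_of_nonneg_left _ (pow_nonneg hs0.le 3)
        apply max_le (pb.nonneg _ _)
        have htr := pb.triangle (h z) z (x (2*n+2))
        have hnn := pb.nonneg (x (2*n+2)) (x (2*n+2))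
        rw [← htdef] at htr
        rw [sub_le_iff_le_add, div_le_iff₀ hs0]
        nlinarith [htr, hnn]
    have hξle : ξ (s^3 * (t/s)) ≤ Hc (ξ t) (ω t) :=
      le_of_tendsto (tξ (fun n : ℕ => s^3 * max 0 (t/s - d (x (2*n+2)) z)) (s^3 * (t/s))
        (mul_nonneg (pow_nonneg hs0.le 3) (div_nonneg ht.le hs0.le))
        (fun n => mul_nonneg (pow_nonneg hs0.le 3) (le_max_left _ _)) hmax) hRle
    have hfin : ξ t ≤ Hc (ξ t) (ω t) := by
      refine le_trans (hξmono t (s^3 * (t/s)) ht0 ?_) hξle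
      have heq : s^3 * (t/s) = s^2 * t := by field_simp
      rw [heq]
      nlinarith [mul_le_mul_of_nonneg_right hs2 ht0]
    have := LZ t ht0 hfin
    linarith
  have hfixη : η z = z := by
    set u := d z (η z) with hudef
    have hu0 : 0 ≤ u := pb.nonneg _ _
    rcases eq_or_lt_of_le hu0 with hu | hu
    · exact eqz _ (by rw [pb.symm]; exact hu.symm)
    exfalso
    have hus : 0 < u * s := mul_pos hu hs0
    have hev1 : ∀ᶠ n in atTop, d (x (2*n)) z < u := hc0.eventually (gt_mem_nhds hu)
    have hev2 : ∀ᶠ n in atTop, δ (2*n) < u := (hδ0.comp t2k).eventually (gt_mem_nhds hu)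
    have hev3 : ∀ᶠ n in atTop, s * d (x (2*n)) z + d (x (2*n+1)) z < u * s := by
      have hlim : Tendsto (fun n : ℕ => s * d (x (2*n)) z + d (x (2*n+1)) z)
          atTop (𝓝 (s*0 + 0)) := (hc0.const_mul s).add hc1
      simp only [mul_zero, add_zero] at hlim
      exact hlim.eventually (gt_mem_nhds hus)
    have hNt : ∀ᶠ n in atTop, PBN d s h η id id (x (2*n)) z = u := by
      filter_upwards [hev1, hev2, hev3] with n e1 e2 e3
      have hPB : PBN d s h η id id (x (2*n)) z =
          max (max (d (x (2*n)) z) (d (x (2*n+1)) (x (2*n))))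
            (max (d z (η z)) ((d (x (2*n)) (η z) + d (x (2*n+1)) z) / (2*s))) := by
        simp only [PBN, id_eq, ← hxe n]
      rw [hPB]
      apply le_antisymm
      · refine max_le (max_le e1.le ?_) (max_le hudef.ge ?_)
        · rw [pb.symm]; exact e2.le
        · rw [div_le_iff₀ h2s]
          have htr := pb.triangle (x (2*n)) (η z) z
          rw [hdzz, ← hudef] at htr
          linarith [e3, htr]
      · rw [hudef]
        exact le_max_of_le_right (le_max_left _ _)
    have hmax : Tendsto (fun n : ℕ => s^3 * max 0 (u/s - d (x (2*n+1)) z))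
        atTop (𝓝 (s^3 * (u/s))) := by
      have h1 : Tendsto (fun n : ℕ => max 0 (u/s - d (x (2*n+1)) z))
          atTop (𝓝 (max 0 (u/s - 0))) :=
        (tendsto_const_nhds : Tendsto (fun _ : ℕ => (0:ℝ)) _ _).max (tendsto_const_nhds.sub hc1)
      rw [sub_zero, max_eq_right (div_nonneg hu.le hs0.le)] at h1
      exact h1.const_mul _
    have hRle : ∀ᶠ n in atTop, ξ (s^3 * max 0 (u/s - d (x (2*n+1)) z)) ≤ Hc (ξ u) (ω u) := by
      filter_upwards [hNt] with n hN
      have hc := contr (x (2*n)) (mem n).1 z zD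
      rw [hN, ← hxe n] at hc
      refine le_trans ?_ hc
      apply hξmono
      · exact mul_nonneg (pow_nonneg hs0.le 3) (le_max_left _ _)
      · apply mul_le_mul_of_nonneg_left _ (pow_nonneg hs0.le 3)
        apply max_le (pb.nonneg _ _)
        have htr := pb.triangle z (η z) (x (2*n+1))
        have hnn := pb.nonneg (x (2*n+1)) (x (2*n+1))
        have hsy : d z (x (2*n+1)) = d (x (2*n+1)) z := pb.symm _ _
        rw [← hudef, hsy] at htr
        rw [sub_le_iff_le_add, div_le_iff₀ hs0]
        nlinarith [htr, hnn]
    have hξle : ξ (s^3 * (u/s)) ≤ Hc (ξ u) (ω u) :=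
      le_of_tendsto (tξ (fun n : ℕ => s^3 * max 0 (u/s - d (x (2*n+1)) z)) (s^3 * (u/s))
        (mul_nonneg (pow_nonneg hs0.le 3) (div_nonneg hu.le hs0.le))
        (fun n => mul_nonneg (pow_nonneg hs0.le 3) (le_max_left _ _)) hmax) hRle
    have hfin : ξ u ≤ Hc (ξ u) (ω u) := by
      refine le_trans (hξmono u (s^3 * (u/s)) hu0 ?_) hξle
      have heq : s^3 * (u/s) = s^2 * u := by field_simp
      rw [heq]
      nlinarith [mul_le_mul_of_nonneg_right hs2 hu0]
    have := LZ u hu0 hfin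
    linarith
  have huniq : ∀ q ∈ C ∪ D, h q = q → η q = q → q = z := by
    intro q hq hhq hηq
    have hqC : q ∈ C := by
      rcases hq with hq | hq
      · exact hq
      · have hη : η q ∈ C := ηDsub ⟨q, hq, rfl⟩
        rwa [hηq] at hη
    have hcq := contr q hqC z zD
    rw [hhq, hfixη] at hcq
    have hPBq : PBN d s h η id id q z = d q z := by
      simp only [PBN, id_eq, hhq, hfixη]
      apply le_antisymm
      · refine max_le (max_le le_rfl (pb.self_le q z)) (max_le ?_ ?_)
        · rw [hdzz]; exact pb.nonneg _ _
        · rw [div_le_iff₀ h2s]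
          nlinarith [pb.nonneg q z, pb.one_le]
      · exact le_max_of_le_left (le_max_left _ _)
    rw [hPBq] at hcq
    have hqz0 : 0 ≤ d q z := pb.nonneg _ _
    have hfin : ξ (d q z) ≤ Hc (ξ (d q z)) (ω (d q z)) := by
      refine le_trans (hξmono _ (s^3 * d q z) hqz0 (le_mul_of_one_le_left hqz0 hs3)) hcq
    exact eqz q (LZ _ hqz0 hfin)
  exact ⟨z, ⟨zC, zD⟩, hfixh, hfixη, huniq⟩
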